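/- (Unbiasedness of the post-hoc weighting, Theorem 1.) If X_{1:N} is distributed according to the pseudo-extended target π^N, then for any bounded measurable f, E_{π^N}[ (Σ_{i=1}^N f(X_i) γ(X_i)/q(X_i)) / (Σ_{i=1}^N γ(X_i)/q(X_i)) ] = E_π[f(X)]. -/

import Mathlib

open MeasureTheory Finset

/-- Unbiasedness of the post-hoc weighting (Theorem 1): the self-normalized
importance-weighted average of a bounded measurable f under the pseudo-extended
target equals the expectation of f under the target π = γ/Z. -/
theorem pseudo_extended_post_hoc_unbiased
    (d N : ℕ) (hN : 0 < N)
    (γ q f : (Fin d → ℝ) → ℝ) (Z : ℝ)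
    (hγm : Measurable γ) (hγ0 : ∀ x, 0 ≤ γ x) (hγi : Integrable γ)
    (hZ : Z = ∫ x, γ x) (hZpos : 0 < Z)
    (hqm : Measurable q) (hq0 : ∀ x, 0 ≤ q x) (hqi : Integrable q)
    (hq1 : ∫ x, q x = 1)
    (hsupp : ∀ x, 0 < γ x → 0 < q x)
    (hfm : Measurable f) (B : ℝ) (hfB : ∀ x, |f x| ≤ B) :
    ∫ xs : Fin N → (Fin d → ℝ),
      ((∑ i, f (xs i) * (γ (xs i) / q (xs i))) / (∑ i, γ (xs i) / q (xs i))) *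
        ((1 / (N : ℝ)) * ∑ i, (γ (xs i) / Z) * ∏ j ∈ univ \ {i}, q (xs j))
    = ∫ x, f x * (γ x / Z) := by
  have hZne : Z ≠ 0 := ne_of_gt hZpos
  have hNne : (N : ℝ) ≠ 0 := Nat.cast_ne_zero.mpr hN.ne'
  -- γ = (γ/q) * q pointwise
  have hγw : ∀ x, γ x = (γ x / q x) * q x := by
    intro x
    rcases eq_or_lt_of_le (hq0 x) with h | h
    · have hγx : γ x = 0 := by
        by_contra hc
        exact absurd (hsupp x (lt_of_le_of_ne (hγ0 x) (Ne.symm hc)))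
          (by rw [← h]; exact lt_irrefl 0)
      simp [hγx, ← h]
    · field_simp
  -- pointwise simplification of the integrand
  have key : ∀ xs : Fin N → (Fin d → ℝ),
      ((∑ i, f (xs i) * (γ (xs i) / q (xs i))) / (∑ i, γ (xs i) / q (xs i))) *
        ((1 / (N : ℝ)) * ∑ i, (γ (xs i) / Z) * ∏ j ∈ univ \ {i}, q (xs j))
      = (1 / ((N : ℝ) * Z)) * ∑ i, (f (xs i) * γ (xs i)) * ∏ j ∈ univ \ {i}, q (xs j) := by
    intro xs
    have hqprod : ∀ i : Fin N, q (xs i) * ∏ j ∈ univ \ {i}, q (xs j) = ∏ j, q (xs j) := by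
      intro i
      rw [Finset.sdiff_singleton_eq_erase]
      exact Finset.mul_prod_erase univ (fun j => q (xs j)) (Finset.mem_univ i)
    have h1 : ∀ i : Fin N, (γ (xs i) / Z) * ∏ j ∈ univ \ {i}, q (xs j)
        = (γ (xs i) / q (xs i)) * (∏ j, q (xs j)) / Z := by
      intro i
      conv_lhs => rw [hγw (xs i)]
      conv_rhs => rw [← hqprod i]
      ring
    have h2 : ∀ i : Fin N, (f (xs i) * γ (xs i)) * ∏ j ∈ univ \ {i}, q (xs j)
        = (f (xs i) * (γ (xs i) / q (xs i))) * ∏ j, q (xs j) := by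
      intro i
      conv_lhs => rw [hγw (xs i)]
      conv_rhs => rw [← hqprod i]
      ring
    rw [Finset.sum_congr rfl (fun i _ => h1 i), Finset.sum_congr rfl (fun i _ => h2 i),
      ← Finset.sum_div, ← Finset.sum_mul, ← Finset.sum_mul]
    by_cases hS : (∑ i, γ (xs i) / q (xs i)) = 0
    · have hwz : ∀ i ∈ univ, γ (xs i) / q (xs i) = 0 := by
        rw [← Finset.sum_eq_zero_iff_of_nonneg (fun i _ => div_nonneg (hγ0 _) (hq0 _))]
        exact hS
      have hA : (∑ i, f (xs i) * (γ (xs i) / q (xs i))) = 0 :=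
        Finset.sum_eq_zero fun i hi => by rw [hwz i hi, mul_zero]
      rw [hS, hA]
      ring
    · field_simp
  simp only [key]
  -- integrability of f * γ
  have hB : 0 ≤ B := le_trans (abs_nonneg _) (hfB (fun _ => 0))
  have hfγi : Integrable (fun x => f x * γ x) := by
    refine Integrable.mono' (hγi.const_mul B) ((hfm.mul hγm).aestronglyMeasurable) ?_
    filter_upwards with x
    rw [norm_mul]
    calc ‖f x‖ * ‖γ x‖ ≤ B * ‖γ x‖ :=
          mul_le_mul_of_nonneg_right (hfB x) (norm_nonneg _)
      _ = B * γ x := by rw [Real.norm_eq_abs, abs_of_nonneg (hγ0 x)]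
  -- rewrite each summand as a product over coordinates
  have hprod : ∀ (i : Fin N) (xs : Fin N → (Fin d → ℝ)),
      (f (xs i) * γ (xs i)) * ∏ j ∈ univ \ {i}, q (xs j)
      = ∏ j, (fun x => if j = i then f x * γ x else q x) (xs j) := by
    intro i xs
    rw [Finset.sdiff_singleton_eq_erase,
      ← Finset.mul_prod_erase univ (fun j => (fun x => if j = i then f x * γ x else q x) (xs j))
        (Finset.mem_univ i)]
    simp only [if_pos rfl]
    congr 1
    refine Finset.prod_congr rfl fun j hj => ?_
    simp only [if_neg (Finset.ne_of_mem_erase hj)]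
  have hintg : ∀ i : Fin N,
      Integrable (fun xs : Fin N → (Fin d → ℝ) =>
        (f (xs i) * γ (xs i)) * ∏ j ∈ univ \ {i}, q (xs j)) := by
    intro i
    simp only [hprod i]
    refine Integrable.fintype_prod (f := fun j x => if j = i then f x * γ x else q x) fun j => ?_
    by_cases h : j = i <;> simp [h, hfγi, hqi]
  have hint : ∀ i : Fin N,
      ∫ xs : Fin N → (Fin d → ℝ), (f (xs i) * γ (xs i)) * ∏ j ∈ univ \ {i}, q (xs j)
      = ∫ x, f x * γ x := by
    intro i
    simp only [hprod i]
    rw [MeasureTheory.integral_fintype_prod_volume_eq_prod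
      (f := fun j x => if j = i then f x * γ x else q x)]
    rw [← Finset.mul_prod_erase univ _ (Finset.mem_univ i)]
    have h2 : ∀ j ∈ univ.erase i,
        (∫ x, (fun j x => if j = i then f x * γ x else q x) j x) = 1 := by
      intro j hj
      simp only [if_neg (Finset.ne_of_mem_erase hj)]
      exact hq1
    rw [Finset.prod_eq_one h2, mul_one]
    simp
  rw [MeasureTheory.integral_const_mul, MeasureTheory.integral_finset_sum _ (fun i _ => hintg i)]
  rw [Finset.sum_congr rfl (fun i _ => hint i), Finset.sum_const, Finset.card_univ,
    Fintype.card_fin, nsmul_eq_mul]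
  have hrhs : ∫ x, f x * (γ x / Z) = (∫ x, f x * γ x) * Z⁻¹ := by
    rw [← MeasureTheory.integral_mul_const]
    congr 1
    ext x
    ring
  rw [hrhs]
  field_simp
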